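/- Let A_1, …, A_N be projective observables on ℂ^d. Then the mutual incompatibility Q_F(A_1, …, A_N) := (1/N²) Σ_{i≠j} Q_F(A_i→A_j) satisfies Q_F(A_1, …, A_N) ≤ (1 − 1/N)(1 − 1/d). -/

import Mathlib

open scoped BigOperators ComplexOrder
open Matrix

noncomputable section

/-- A projective observable: a finite family of mutually orthogonal
self-adjoint idempotents summing to the identity. -/
def IsProjObs {d r : ℕ} (P : Fin r → Matrix (Fin d) (Fin d) ℂ) : Prop :=
  (∀ i, (P i).IsHermitian) ∧ (∀ i, P i * P i = P i) ∧
    (∀ i k, i ≠ k → P i * P k = 0) ∧ (∑ i, P i = 1)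

/-- A density matrix: positive semidefinite with unit trace. -/
def IsDensity {d : ℕ} (ρ : Matrix (Fin d) (Fin d) ℂ) : Prop :=
  ρ.PosSemidef ∧ ρ.trace = 1

/-- The measurement channel `E^A(ρ) = Σ_i P_i ρ P_i` of a projective observable. -/
def measChannel {d r : ℕ} (P : Fin r → Matrix (Fin d) (Fin d) ℂ)
    (ρ : Matrix (Fin d) (Fin d) ℂ) : Matrix (Fin d) (Fin d) ℂ :=
  ∑ i, P i * ρ * P i

/-- `p^B_ρ(j) = tr(P^B_j ρ)`. -/
def probB {d rB : ℕ} (Q : Fin rB → Matrix (Fin d) (Fin d) ℂ)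
    (ρ : Matrix (Fin d) (Fin d) ℂ) (j : Fin rB) : ℝ :=
  ((Q j * ρ).trace).re

/-- `q^{A→B}_ρ(j) = tr(P^B_j Σ_i P^A_i ρ P^A_i)`. -/
def probAB {d rA rB : ℕ} (P : Fin rA → Matrix (Fin d) (Fin d) ℂ)
    (Q : Fin rB → Matrix (Fin d) (Fin d) ℂ)
    (ρ : Matrix (Fin d) (Fin d) ℂ) (j : Fin rB) : ℝ :=
  ((Q j * measChannel P ρ).trace).re

open Classical in
/-- The positive semidefinite square root of a PSD matrix (junk value `0` otherwise). -/
noncomputable def msqrt {d : ℕ} (A : Matrix (Fin d) (Fin d) ℂ) :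
    Matrix (Fin d) (Fin d) ℂ :=
  if h : A.PosSemidef then (h.1.eigenvectorUnitary : Matrix (Fin d) (Fin d) ℂ) *
    diagonal ((↑) ∘ (√·) ∘ h.1.eigenvalues) *
    (star h.1.eigenvectorUnitary : Matrix (Fin d) (Fin d) ℂ) else 0

/-- `|X| = √(Xᴴ X)`, the positive semidefinite absolute value of a matrix. -/
noncomputable def matAbs {d : ℕ} (X : Matrix (Fin d) (Fin d) ℂ) :
    Matrix (Fin d) (Fin d) ℂ :=
  msqrt (Xᴴ * X)

/-- The quantum fidelity `F(ρ,σ) = tr √(√ρ σ √ρ)`. -/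
noncomputable def qFid {d : ℕ} (ρ σ : Matrix (Fin d) (Fin d) ℂ) : ℝ :=
  ((msqrt (msqrt ρ * σ * msqrt ρ)).trace).re

/-- Variational distance `D_1(p,q) = (1/2) Σ_j |p_j − q_j|`. -/
def distL1 {rB : ℕ} (p q : Fin rB → ℝ) : ℝ := (1 / 2) * ∑ j, |p j - q j|

/-- Chebyshev distance `D_∞(p,q) = max_j |p_j − q_j|`. -/
noncomputable def distLinf {rB : ℕ} (p q : Fin rB → ℝ) : ℝ := ⨆ j, |p j - q j|

/-- Classical fidelity `F(p,q) = Σ_j √(p_j q_j)`. -/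
noncomputable def classFid {rB : ℕ} (p q : Fin rB → ℝ) : ℝ :=
  ∑ j, Real.sqrt (p j * q j)

/-- `Q_1(A→B)`. -/
noncomputable def Q1 {d rA rB : ℕ} (P : Fin rA → Matrix (Fin d) (Fin d) ℂ)
    (Q : Fin rB → Matrix (Fin d) (Fin d) ℂ) : ℝ :=
  sSup {x : ℝ | ∃ ρ, IsDensity ρ ∧ x = distL1 (probAB P Q ρ) (probB Q ρ)}

/-- `Q_∞(A→B)`. -/
noncomputable def Qinf {d rA rB : ℕ} (P : Fin rA → Matrix (Fin d) (Fin d) ℂ)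
    (Q : Fin rB → Matrix (Fin d) (Fin d) ℂ) : ℝ :=
  sSup {x : ℝ | ∃ ρ, IsDensity ρ ∧ x = distLinf (probAB P Q ρ) (probB Q ρ)}

/-- `Q_F(A→B)`. -/
noncomputable def QF {d rA rB : ℕ} (P : Fin rA → Matrix (Fin d) (Fin d) ℂ)
    (Q : Fin rB → Matrix (Fin d) (Fin d) ℂ) : ℝ :=
  sSup {x : ℝ | ∃ ρ, IsDensity ρ ∧
    x = 1 - (classFid (probAB P Q ρ) (probB Q ρ)) ^ 2}

/-- The rank-one projection `|v⟩⟨v|` onto a (unit) vector `v`. -/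
def proj {d : ℕ} (v : Fin d → ℂ) : Matrix (Fin d) (Fin d) ℂ :=
  Matrix.vecMulVec v (star v)

-- aux
lemma re_conj_mul (z : ℂ) : ((starRingEnd ℂ) z * z).re = ‖z‖ ^ 2 := by
  rw [Complex.sq_norm, Complex.normSq_apply]
  simp [Complex.mul_re]

lemma trace_conj_mul_eq {d : ℕ} (X Y : Matrix (Fin d) (Fin d) ℂ) :
    (Xᴴ * Y).trace = ∑ p : Fin d × Fin d, (starRingEnd ℂ) (X p.2 p.1) * Y p.2 p.1 := by
  rw [Matrix.trace, Fintype.sum_prod_type]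
  simp [Matrix.mul_apply, Matrix.diag, Matrix.conjTranspose_apply]

lemma re_trace_conj_self {d : ℕ} (X : Matrix (Fin d) (Fin d) ℂ) :
    ((Xᴴ * X).trace).re = ∑ p : Fin d × Fin d, ‖X p.2 p.1‖ ^ 2 := by
  rw [trace_conj_mul_eq, Complex.re_sum]
  exact Finset.sum_congr rfl fun p _ => re_conj_mul _

lemma re_trace_conj_self_nonneg {d : ℕ} (X : Matrix (Fin d) (Fin d) ℂ) :
    0 ≤ ((Xᴴ * X).trace).re := by
  rw [re_trace_conj_self]
  exact Finset.sum_nonneg fun p _ => sq_nonneg _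

lemma norm_trace_conj_mul_le {d : ℕ} (X Y : Matrix (Fin d) (Fin d) ℂ) :
    ‖(Xᴴ * Y).trace‖ ≤
      Real.sqrt (((Xᴴ * X).trace).re) * Real.sqrt (((Yᴴ * Y).trace).re) := by
  rw [trace_conj_mul_eq, re_trace_conj_self, re_trace_conj_self]
  have h1 : ‖∑ p : Fin d × Fin d, (starRingEnd ℂ) (X p.2 p.1) * Y p.2 p.1‖ ≤
      ∑ p : Fin d × Fin d, ‖X p.2 p.1‖ * ‖Y p.2 p.1‖ := by
    refine (norm_sum_le _ _).trans (le_of_eq ?_)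
    refine Finset.sum_congr rfl fun p _ => ?_
    rw [norm_mul, RingHomIsometric.norm_map]
  refine h1.trans ?_
  have h2 := Finset.sum_mul_sq_le_sq_mul_sq Finset.univ
    (fun p : Fin d × Fin d => ‖X p.2 p.1‖) (fun p => ‖Y p.2 p.1‖)
  have h3 : (0:ℝ) ≤ ∑ p : Fin d × Fin d, ‖X p.2 p.1‖ * ‖Y p.2 p.1‖ :=
    Finset.sum_nonneg fun p _ => mul_nonneg (norm_nonneg _) (norm_nonneg _)
  calc ∑ p : Fin d × Fin d, ‖X p.2 p.1‖ * ‖Y p.2 p.1‖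
      = Real.sqrt ((∑ p : Fin d × Fin d, ‖X p.2 p.1‖ * ‖Y p.2 p.1‖) ^ 2) :=
        (Real.sqrt_sq h3).symm
    _ ≤ Real.sqrt ((∑ p : Fin d × Fin d, ‖X p.2 p.1‖ ^ 2) *
          ∑ p : Fin d × Fin d, ‖Y p.2 p.1‖ ^ 2) := Real.sqrt_le_sqrt h2
    _ = _ := Real.sqrt_mul (Finset.sum_nonneg fun p _ => sq_nonneg _) _

open Classical in
lemma card_nonzero_le {d rA : ℕ} {P : Fin rA → Matrix (Fin d) (Fin d) ℂ}
    (hP : IsProjObs P) :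
    (Finset.univ.filter fun i => P i ≠ 0).card ≤ d := by
  set S := Finset.univ.filter fun i => P i ≠ 0 with hS
  have hcol : ∀ i : S, ∃ kc : Fin d × Fin d, P i.1 kc.1 kc.2 ≠ 0 := by
    rintro ⟨i, hi⟩
    have hne : P i ≠ 0 := (Finset.mem_filter.1 hi).2
    by_contra h
    push_neg at h
    exact hne (Matrix.ext fun k c => h (k, c))
  choose kc hkc using hcol
  set v : S → EuclideanSpace ℂ (Fin d) := fun i => WithLp.toLp 2 (fun k => P i.1 k (kc i).2) with hv
  have hvz : ∀ i, v i ≠ 0 := by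
    intro i h
    exact hkc i (by simpa [hv] using congrArg (fun w => w (kc i).1) h)
  have horth : Pairwise fun i j : S => (inner ℂ (v i) (v j) : ℂ) = 0 := by
    intro i j hij
    have hij' : i.1 ≠ j.1 := fun h => hij (Subtype.ext h)
    have hz : P i.1 * P j.1 = 0 := hP.2.2.1 _ _ hij'
    have : (inner ℂ (v i) (v j) : ℂ) = ((P i.1)ᴴ * P j.1) (kc i).2 (kc j).2 := by
      rw [PiLp.inner_apply]
      simp [Matrix.mul_apply, Matrix.conjTranspose_apply, RCLike.inner_apply, hv, mul_comm]
    rw [this, hP.1 i.1, hz]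
    rfl
  have hli := linearIndependent_of_ne_zero_of_inner_eq_zero (𝕜 := ℂ) hvz horth
  have hcard := hli.fintype_card_le_finrank
  simpa [finrank_euclideanSpace] using hcard

open Classical in
lemma fid_sq_ge {d rA rB : ℕ} (hd : 0 < d)
    {P : Fin rA → Matrix (Fin d) (Fin d) ℂ} {Q : Fin rB → Matrix (Fin d) (Fin d) ℂ}
    (hP : IsProjObs P) (hQ : IsProjObs Q)
    {ρ : Matrix (Fin d) (Fin d) ℂ} (hρ : IsDensity ρ) :
    1 / (d : ℝ) ≤ (classFid (probAB P Q ρ) (probB Q ρ)) ^ 2 := by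
  obtain ⟨hpsd, htr⟩ := hρ
  obtain ⟨S0, hSS, hSh⟩ : ∃ S0 : Matrix (Fin d) (Fin d) ℂ, S0 * S0 = ρ ∧ S0ᴴ = S0 := by
    open scoped MatrixOrder in
    exact ⟨CFC.sqrt ρ, CFC.sqrt_mul_sqrt_self ρ hpsd.nonneg, (CFC.sqrt_nonneg ρ).posSemidef.1⟩
  set p := probB Q ρ with hp
  set q := probAB P Q ρ with hq
  have hdR : (0:ℝ) < (d:ℝ) := by exact_mod_cast hd
  -- per-outcome facts
  have key : ∀ j, 0 ≤ p j ∧ 0 ≤ q j ∧ p j ^ 2 ≤ (d:ℝ) * (p j * q j) := by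
    intro j
    set A := Q j * S0 with hAdef
    set B : Fin rA → Matrix (Fin d) (Fin d) ℂ := fun i => Q j * (P i * S0) with hBdef
    set a : Fin rA → ℝ := fun i => ((Q j * (P i * ρ * P i)).trace).re with hadef
    have e1 : Aᴴ * A = S0 * (Q j * S0) := by
      rw [hAdef, conjTranspose_mul, hSh, hQ.1 j]
      simp only [Matrix.mul_assoc]
      rw [← Matrix.mul_assoc (Q j) (Q j), hQ.2.1 j]
    have hA : ((Aᴴ * A).trace).re = p j := by
      rw [e1, Matrix.trace_mul_comm, Matrix.mul_assoc, hSS]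
      rfl
    have hB : ∀ i, (((B i)ᴴ * B i).trace).re = a i := by
      intro i
      have eB : (B i)ᴴ * B i = S0 * (P i * (Q j * (P i * S0))) := by
        rw [hBdef]
        simp only [conjTranspose_mul, hSh]
        rw [hP.1 i, hQ.1 j]
        simp only [Matrix.mul_assoc]
        rw [← Matrix.mul_assoc (Q j) (Q j), hQ.2.1 j]
      have t1 : (S0 * (P i * (Q j * (P i * S0)))).trace
          = (P i * (Q j * (P i * ρ))).trace := by
        rw [Matrix.trace_mul_comm]
        congr 1
        simp only [Matrix.mul_assoc]
        rw [hSS]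
      have t2 : (P i * (Q j * (P i * ρ))).trace
          = (Q j * (P i * ρ * P i)).trace := by
        rw [Matrix.trace_mul_comm]
        congr 1
        simp only [Matrix.mul_assoc]
      rw [eB, t1, t2]
    have hAB : ∀ i, Aᴴ * B i = S0 * (Q j * (P i * S0)) := by
      intro i
      rw [hAdef, hBdef, conjTranspose_mul, hSh, hQ.1 j]
      simp only [Matrix.mul_assoc]
      rw [← Matrix.mul_assoc (Q j) (Q j), hQ.2.1 j]
    have hsumB : ∑ i, B i = A := by
      rw [hBdef, hAdef, ← Finset.mul_sum, ← Finset.sum_mul, hP.2.2.2, Matrix.one_mul]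
    have hpsum : p j = ∑ i, ((Aᴴ * B i).trace).re := by
      rw [← hA, ← Complex.re_sum, ← Matrix.trace_sum, ← Finset.mul_sum, hsumB]
    have hqsum : q j = ∑ i, a i := by
      rw [hq, probAB, measChannel, Finset.mul_sum, Matrix.trace_sum, Complex.re_sum]
    have ha_nonneg : ∀ i, 0 ≤ a i := by
      intro i
      rw [← hB i]
      exact re_trace_conj_self_nonneg _
    have hp_nonneg : 0 ≤ p j := by
      rw [← hA]; exact re_trace_conj_self_nonneg _
    have hq_nonneg : 0 ≤ q j := by
      rw [hqsum]; exact Finset.sum_nonneg fun i _ => ha_nonneg i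
    refine ⟨hp_nonneg, hq_nonneg, ?_⟩
    set Sf := Finset.univ.filter fun i => P i ≠ 0 with hSf
    have hfil : p j = ∑ i ∈ Sf, ((Aᴴ * B i).trace).re := by
      rw [hpsum]
      refine (Finset.sum_filter_of_ne ?_).symm
      intro i _ hne
      by_contra h0
      apply hne
      have : B i = 0 := by rw [hBdef]; simp [h0]
      rw [this, Matrix.mul_zero, Matrix.trace_zero]
      rfl
    have hbound : ∀ i, ((Aᴴ * B i).trace).re ≤ Real.sqrt (p j) * Real.sqrt (a i) := by
      intro i
      refine le_trans (Complex.re_le_norm _) ?_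
      have := norm_trace_conj_mul_le A (B i)
      rw [hA, hB i] at this
      exact this
    have hT : p j ≤ Real.sqrt (p j) * ∑ i ∈ Sf, Real.sqrt (a i) := by
      calc p j = ∑ i ∈ Sf, ((Aᴴ * B i).trace).re := hfil
        _ ≤ ∑ i ∈ Sf, Real.sqrt (p j) * Real.sqrt (a i) :=
            Finset.sum_le_sum fun i _ => hbound i
        _ = Real.sqrt (p j) * ∑ i ∈ Sf, Real.sqrt (a i) := (Finset.mul_sum _ _ _).symm
    have hCS : (∑ i ∈ Sf, Real.sqrt (a i)) ^ 2 ≤ (d:ℝ) * q j := by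
      have h1 : (∑ i ∈ Sf, Real.sqrt (a i)) ^ 2 ≤
          (∑ _i ∈ Sf, (1:ℝ)) * ∑ i ∈ Sf, a i := by
        refine Finset.sum_sq_le_sum_mul_sum_of_sq_eq_mul Sf
          (fun i _ => zero_le_one) (fun i _ => ha_nonneg i) (fun i _ => ?_)
        rw [Real.sq_sqrt (ha_nonneg i), one_mul]
      have h2 : (∑ _i ∈ Sf, (1:ℝ)) ≤ (d:ℝ) := by
        rw [Finset.sum_const, nsmul_eq_mul, mul_one]
        exact_mod_cast card_nonzero_le hP
      have h3 : ∑ i ∈ Sf, a i ≤ q j := by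
        rw [hqsum]
        exact Finset.sum_le_sum_of_subset_of_nonneg (Finset.filter_subset _ _)
          fun i _ _ => ha_nonneg i
      calc (∑ i ∈ Sf, Real.sqrt (a i)) ^ 2 ≤ (∑ _i ∈ Sf, (1:ℝ)) * ∑ i ∈ Sf, a i := h1
        _ ≤ (d:ℝ) * q j := by
            apply mul_le_mul h2 h3 (Finset.sum_nonneg fun i _ => ha_nonneg i) hdR.le
    have hmain : p j ^ 2 ≤ (d:ℝ) * (p j * q j) := by
      have h4 : p j ^ 2 ≤ (Real.sqrt (p j) * ∑ i ∈ Sf, Real.sqrt (a i)) ^ 2 :=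
        pow_le_pow_left₀ hp_nonneg hT 2
      rw [mul_pow, Real.sq_sqrt hp_nonneg] at h4
      calc p j ^ 2 ≤ p j * (∑ i ∈ Sf, Real.sqrt (a i)) ^ 2 := h4
        _ ≤ p j * ((d:ℝ) * q j) := mul_le_mul_of_nonneg_left hCS hp_nonneg
        _ = (d:ℝ) * (p j * q j) := by ring
    exact hmain
  -- sum of p is 1
  have hsum1 : ∑ j, p j = 1 := by
    rw [hp]
    simp only [probB]
    rw [← Complex.re_sum, ← Matrix.trace_sum, ← Finset.sum_mul, hQ.2.2.2, Matrix.one_mul,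
      htr]
    rfl
  -- lower bound for fidelity
  have hF : 1 / Real.sqrt d ≤ classFid q p := by
    have hterm : ∀ j, p j / Real.sqrt d ≤ Real.sqrt (q j * p j) := by
      intro j
      obtain ⟨hp0, hq0, hm⟩ := key j
      have hsd : (0:ℝ) < Real.sqrt d := Real.sqrt_pos.2 hdR
      rw [Real.le_sqrt (by positivity) (mul_nonneg hq0 hp0)]
      rw [div_pow, Real.sq_sqrt hdR.le, div_le_iff₀ hdR]
      calc p j ^ 2 ≤ (d:ℝ) * (p j * q j) := hm
        _ = q j * p j * (d:ℝ) := by ring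
    calc 1 / Real.sqrt d = (∑ j, p j) / Real.sqrt d := by rw [hsum1]
      _ = ∑ j, p j / Real.sqrt d := Finset.sum_div _ _ _
      _ ≤ ∑ j, Real.sqrt (q j * p j) := Finset.sum_le_sum fun j _ => hterm j
      _ = classFid q p := rfl
  have hF0 : (0:ℝ) ≤ 1 / Real.sqrt d := by positivity
  have := pow_le_pow_left₀ hF0 hF 2
  calc 1 / (d:ℝ) = (1 / Real.sqrt d) ^ 2 := by
        rw [div_pow, one_pow, Real.sq_sqrt hdR.le]
    _ ≤ (classFid q p) ^ 2 := this

lemma QF_le_aux {d rA rB : ℕ} (hd : 0 < d)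
    {P : Fin rA → Matrix (Fin d) (Fin d) ℂ} {Q : Fin rB → Matrix (Fin d) (Fin d) ℂ}
    (hP : IsProjObs P) (hQ : IsProjObs Q) : QF P Q ≤ 1 - 1 / (d : ℝ) := by
  have hdR : (0:ℝ) < (d:ℝ) := by exact_mod_cast hd
  have h1 : 1 / (d:ℝ) ≤ 1 := by
    rw [div_le_one hdR]
    exact_mod_cast hd
  apply Real.sSup_le
  · rintro x ⟨ρ, hρ, rfl⟩
    have := fid_sq_ge hd hP hQ hρ
    linarith
  · linarith

theorem stmt_11 {d N : ℕ} (hd : 0 < d) (hN : 0 < N)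
    (r : Fin N → ℕ) (P : ∀ i, Fin (r i) → Matrix (Fin d) (Fin d) ℂ)
    (hP : ∀ i, IsProjObs (P i)) :
    (1 / (N : ℝ) ^ 2) * ∑ i, ∑ j, (if i = j then 0 else QF (P i) (P j))
      ≤ (1 - 1 / (N : ℝ)) * (1 - 1 / (d : ℝ)) := by
  classical
  set c : ℝ := 1 - 1 / (d:ℝ) with hc
  have hdR : (0:ℝ) < (d:ℝ) := by exact_mod_cast hd
  have hc0 : 0 ≤ c := by
    have : 1 / (d:ℝ) ≤ 1 := by
      rw [div_le_one hdR]; exact_mod_cast hd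
    simp only [hc]; linarith
  have hb : ∀ i j : Fin N, (if i = j then (0:ℝ) else QF (P i) (P j))
      ≤ if i = j then 0 else c := by
    intro i j
    split
    · exact le_refl _
    · exact QF_le_aux hd (hP i) (hP j)
  have hrow : ∀ i : Fin N, ∑ j : Fin N, (if i = j then (0:ℝ) else c)
      = (N:ℝ) * c - c := by
    intro i
    have he : ∀ j : Fin N, (if i = j then (0:ℝ) else c)
        = c - (if i = j then c else 0) := by
      intro j; split <;> ring
    rw [Finset.sum_congr rfl fun j _ => he j, Finset.sum_sub_distrib,
      Finset.sum_const, Finset.sum_ite_eq, Finset.card_univ, Fintype.card_fin]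
    simp [nsmul_eq_mul]
  have hsum : ∑ i, ∑ j, (if i = j then (0:ℝ) else QF (P i) (P j))
      ≤ (N:ℝ) * ((N:ℝ) * c - c) := by
    calc ∑ i, ∑ j, (if i = j then (0:ℝ) else QF (P i) (P j))
        ≤ ∑ _i : Fin N, ∑ j : Fin N, (if _i = j then (0:ℝ) else c) :=
          Finset.sum_le_sum fun i _ => Finset.sum_le_sum fun j _ => hb i j
      _ = ∑ _i : Fin N, ((N:ℝ) * c - c) :=
          Finset.sum_congr rfl fun i _ => hrow i
      _ = (N:ℝ) * ((N:ℝ) * c - c) := by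
          rw [Finset.sum_const, Finset.card_univ, Fintype.card_fin, nsmul_eq_mul]
  have hN' : (0:ℝ) < (N:ℝ) := by exact_mod_cast hN
  calc (1 / (N : ℝ) ^ 2) * ∑ i, ∑ j, (if i = j then 0 else QF (P i) (P j))
      ≤ (1 / (N : ℝ) ^ 2) * ((N:ℝ) * ((N:ℝ) * c - c)) := by
        apply mul_le_mul_of_nonneg_left hsum (by positivity)
    _ = (1 - 1 / (N : ℝ)) * c := by
        field_simp

end
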